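/- For every integer n ≥ 1, every good placement Q of queens on the n × n board B_n satisfies 2·|Q| ≥ n (that is, the size of Q is at least n/2). -/

import Mathlib

/-- The n × n board: squares {1,…,n} × {1,…,n} ⊆ ℤ². -/
noncomputable def board (n : ℕ) : Finset (ℤ × ℤ) :=
  Finset.Icc (1 : ℤ) n ×ˢ Finset.Icc (1 : ℤ) n

/-- Two squares share a column, row, diagonal, or antidiagonal. -/
def SameLine (a b : ℤ × ℤ) : Prop :=
  a.1 = b.1 ∨ a.2 = b.2 ∨ a.1 - a.2 = b.1 - b.2 ∨ a.1 + a.2 = b.1 + b.2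

/-- A set of squares contains three (pairwise distinct) squares in a line. -/
def ThreeInLine (S : Finset (ℤ × ℤ)) : Prop :=
  ∃ a ∈ S, ∃ b ∈ S, ∃ c ∈ S, a ≠ b ∧ a ≠ c ∧ b ≠ c ∧
    ((a.1 = b.1 ∧ b.1 = c.1) ∨ (a.2 = b.2 ∧ b.2 = c.2) ∨
     (a.1 - a.2 = b.1 - b.2 ∧ b.1 - b.2 = c.1 - c.2) ∨
     (a.1 + a.2 = b.1 + b.2 ∧ b.1 + b.2 = c.1 + c.2))

/-- A good placement on B_n: a subset of the board with no three in a line,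
    such that adding any unoccupied square of the board creates three in a line. -/
def IsGoodPlacement (n : ℕ) (Q : Finset (ℤ × ℤ)) : Prop :=
  Q ⊆ board n ∧ ¬ ThreeInLine Q ∧
    ∀ s ∈ board n, s ∉ Q → ThreeInLine (insert s Q)

lemma pair_of_three (s : ℤ × ℤ) (Q : Finset (ℤ × ℤ)) (h3 : ThreeInLine (insert s Q))
    (hQ : ¬ ThreeInLine Q) :
    ∃ u ∈ Q, ∃ v ∈ Q, u ≠ v ∧
      ((u.1 = s.1 ∧ v.1 = s.1) ∨ (u.2 = s.2 ∧ v.2 = s.2) ∨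
       (u.1 - u.2 = s.1 - s.2 ∧ v.1 - v.2 = s.1 - s.2) ∨
       (u.1 + u.2 = s.1 + s.2 ∧ v.1 + v.2 = s.1 + s.2)) := by
  obtain ⟨a, ha, b, hb, c, hc, hab, hac, hbc, hl⟩ := h3
  rw [Finset.mem_insert] at ha hb hc
  rcases ha with rfl | ha
  · have hb' : b ∈ Q := hb.resolve_left fun e => hab e.symm
    have hc' : c ∈ Q := hc.resolve_left fun e => hac e.symm
    exact ⟨b, hb', c, hc', hbc, by omega⟩
  rcases hb with rfl | hb
  · have hc' : c ∈ Q := hc.resolve_left fun e => hbc e.symm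
    exact ⟨a, ha, c, hc', hac, by omega⟩
  rcases hc with rfl | hc
  · exact ⟨a, ha, b, hb, hab, by omega⟩
  · exact absurd ⟨a, ha, b, hb, c, hc, hab, hac, hbc, hl⟩ hQ

lemma fiber_count (Q : Finset (ℤ × ℤ)) (f : ℤ × ℤ → ℤ) :
    2 * ((Q.image f).filter (fun d => 2 ≤ (Q.filter (fun a => f a = d)).card)).card ≤ Q.card := by
  classical
  set D := (Q.image f).filter (fun d => 2 ≤ (Q.filter (fun a => f a = d)).card) with hDdef
  have h1 : Q.card = ∑ d ∈ Q.image f, (Q.filter (fun a => f a = d)).card :=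
    Finset.card_eq_sum_card_fiberwise (fun x hx => Finset.mem_image_of_mem f hx)
  have h2 : ∑ d ∈ D, (Q.filter (fun a => f a = d)).card
      ≤ ∑ d ∈ Q.image f, (Q.filter (fun a => f a = d)).card :=
    Finset.sum_le_sum_of_subset (Finset.filter_subset _ _)
  have h3 : D.card * 2 ≤ ∑ d ∈ D, (Q.filter (fun a => f a = d)).card := by
    have := Finset.card_nsmul_le_sum D (fun d => (Q.filter (fun a => f a = d)).card) 2
      (fun x hx => (Finset.mem_filter.mp hx).2)
    simpa [smul_eq_mul] using this
  omega

theorem stmt_11 (n : ℕ) (hn : 1 ≤ n)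
    (Q : Finset (ℤ × ℤ)) (hQ : IsGoodPlacement n Q) : n ≤ 2 * Q.card := by
  by_contra hlt
  push_neg at hlt
  obtain ⟨hQb, hno3, hsat⟩ := hQ
  have hIcc : (Finset.Icc (1 : ℤ) n).card = n := by
    rw [Int.card_Icc]; simp
  -- a free row r
  have hr : ∃ r ∈ Finset.Icc (1 : ℤ) n, r ∉ Q.image Prod.snd := by
    by_contra h
    push_neg at h
    have hsub : Finset.Icc (1 : ℤ) n ⊆ Q.image Prod.snd := fun x hx => h x hx
    have := Finset.card_le_card hsub
    have := Finset.card_image_le (s := Q) (f := Prod.snd)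
    omega
  obtain ⟨r, hrmem, hrfree⟩ := hr
  set D := (Q.image (fun a => a.1 - a.2)).filter
      (fun d => 2 ≤ (Q.filter (fun a => a.1 - a.2 = d)).card) with hDdef
  set E := (Q.image (fun a => a.1 + a.2)).filter
      (fun d => 2 ≤ (Q.filter (fun a => a.1 + a.2 = d)).card) with hEdef
  have hD : 2 * D.card ≤ Q.card := fiber_count Q _
  have hE : 2 * E.card ≤ Q.card := fiber_count Q _
  set Bad := (Q.image Prod.fst ∪ D.image (fun d => d + r)) ∪ E.image (fun e => e - r) with hBaddef
  have hBadcard : Bad.card < n := by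
    have h1 := Finset.card_union_le (Q.image Prod.fst ∪ D.image (fun d => d + r))
      (E.image (fun e => e - r))
    have h2 := Finset.card_union_le (Q.image Prod.fst) (D.image (fun d => d + r))
    have h3 := Finset.card_image_le (s := Q) (f := Prod.fst)
    have h4 := Finset.card_image_le (s := D) (f := fun d => d + r)
    have h5 := Finset.card_image_le (s := E) (f := fun e => e - r)
    rw [hBaddef]
    omega
  have hc : ∃ c ∈ Finset.Icc (1 : ℤ) n, c ∉ Bad := by
    by_contra h
    push_neg at h
    have hsub : Finset.Icc (1 : ℤ) n ⊆ Bad := fun x hx => h x hx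
    have := Finset.card_le_card hsub
    omega
  obtain ⟨c, hcmem, hcfree⟩ := hc
  have hsB : (c, r) ∈ board n := Finset.mem_product.mpr ⟨hcmem, hrmem⟩
  have hsQ : (c, r) ∉ Q := by
    intro h
    exact hcfree (Finset.mem_union_left _ (Finset.mem_union_left _
      (Finset.mem_image_of_mem Prod.fst h)))
  have h3 := hsat (c, r) hsB hsQ
  obtain ⟨u, hu, v, hv, huv, hline⟩ := pair_of_three (c, r) Q h3 hno3
  rcases hline with ⟨h1, h2⟩ | ⟨h1, h2⟩ | ⟨h1, h2⟩ | ⟨h1, h2⟩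
  · exact hcfree (Finset.mem_union_left _ (Finset.mem_union_left _
      (Finset.mem_image.mpr ⟨u, hu, h1⟩)))
  · exact hrfree (Finset.mem_image.mpr ⟨u, hu, h1⟩)
  · have hdmem : c - r ∈ D := by
      refine Finset.mem_filter.mpr ⟨Finset.mem_image.mpr ⟨u, hu, h1⟩, ?_⟩
      have hsub : ({u, v} : Finset (ℤ × ℤ)) ⊆ Q.filter (fun a => a.1 - a.2 = c - r) := by
        intro x hx
        rw [Finset.mem_insert, Finset.mem_singleton] at hx
        rcases hx with rfl | rfl
        · exact Finset.mem_filter.mpr ⟨hu, h1⟩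
        · exact Finset.mem_filter.mpr ⟨hv, h2⟩
      calc 2 = ({u, v} : Finset (ℤ × ℤ)).card := (Finset.card_pair huv).symm
        _ ≤ _ := Finset.card_le_card hsub
    exact hcfree (Finset.mem_union_left _ (Finset.mem_union_right _
      (Finset.mem_image.mpr ⟨c - r, hdmem, by ring⟩)))
  · have hemem : c + r ∈ E := by
      refine Finset.mem_filter.mpr ⟨Finset.mem_image.mpr ⟨u, hu, h1⟩, ?_⟩
      have hsub : ({u, v} : Finset (ℤ × ℤ)) ⊆ Q.filter (fun a => a.1 + a.2 = c + r) := by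
        intro x hx
        rw [Finset.mem_insert, Finset.mem_singleton] at hx
        rcases hx with rfl | rfl
        · exact Finset.mem_filter.mpr ⟨hu, h1⟩
        · exact Finset.mem_filter.mpr ⟨hv, h2⟩
      calc 2 = ({u, v} : Finset (ℤ × ℤ)).card := (Finset.card_pair huv).symm
        _ ≤ _ := Finset.card_le_card hsub
    exact hcfree (Finset.mem_union_right _
      (Finset.mem_image.mpr ⟨c + r, hemem, by ring⟩))
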